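/- If in the pool graph there is a directed path from pool P1 to pool P2, then every miner in P1 has infinitely many journeys to every miner in P2. -/
import Mathlib


/-- A journey from `m` to `m'` starting after round `r`: a nonempty temporal path of links
occurring in strictly increasing rounds, all after `r`. -/
def Journey {M : Type} (link : ℕ → M → M → Prop) (r : ℕ) (m m' : M) : Prop :=
  ∃ (k : ℕ) (f : ℕ → M) (t : ℕ → ℕ),
    0 < k ∧ f 0 = m ∧ f k = m' ∧
    (∀ i, i < k → link (t i) (f i) (f (i + 1))) ∧
    (∀ i, i < k → r < t i) ∧
    (∀ i j, i < j → j < k → t i < t j)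

/-- `m` has infinitely many journeys to `m'`: journeys starting arbitrarily late. -/
def InfJ {M : Type} (link : ℕ → M → M → Prop) (m m' : M) : Prop :=
  ∀ r : ℕ, Journey link r m m'

/-- The pool relation: equal, or infinitely many journeys in both directions. -/
def PoolRel {M : Type} (link : ℕ → M → M → Prop) (m m' : M) : Prop :=
  m = m' ∨ (InfJ link m m' ∧ InfJ link m' m)

/-- A mining pool: an equivalence class of the pool relation. -/
def IsPool {M : Type} (link : ℕ → M → M → Prop) (P : Set M) : Prop :=
  ∃ m : M, P = {m' | PoolRel link m m'}

/-- Pool-graph edge: infinitely many rounds contain a link from `P1` to `P2`. -/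
def PoolEdge {M : Type} (link : ℕ → M → M → Prop) (P1 P2 : Set M) : Prop :=
  ∀ r : ℕ, ∃ ρ, r < ρ ∧ ∃ m1 ∈ P1, ∃ m2 ∈ P2, link ρ m1 m2

/-- Edge of the pool graph (between pools). -/
def PGEdge {M : Type} (link : ℕ → M → M → Prop) (P1 P2 : Set M) : Prop :=
  IsPool link P1 ∧ IsPool link P2 ∧ PoolEdge link P1 P2

/-- A source pool: a pool with only finitely many journeys from outside miners into it,
i.e. no outside miner has infinitely many journeys to a pool member. -/
def SourcePool {M : Type} (link : ℕ → M → M → Prop) (P : Set M) : Prop :=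
  IsPool link P ∧ ∀ m, m ∉ P → ∀ m' ∈ P, ¬ InfJ link m m'

lemma journey_trans {M : Type} {link : ℕ → M → M → Prop} {r : ℕ} {m m' m'' : M}
    (h1 : Journey link r m m') (h2 : ∀ s, Journey link s m' m'') :
    Journey link r m m'' := by
  obtain ⟨k1, f1, t1, hk1, hf10, hf1k, hl1, hr1, hmono1⟩ := h1
  obtain ⟨k2, f2, t2, hk2, hf20, hf2k, hl2, hr2, hmono2⟩ := h2 (t1 (k1 - 1))
  have ht1max : ∀ i, i < k1 → t1 i ≤ t1 (k1 - 1) := by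
    intro i hi
    rcases Nat.lt_or_ge i (k1 - 1) with h | h
    · exact (hmono1 i (k1 - 1) h (by omega)).le
    · have : i = k1 - 1 := by omega
      simp [this]
  refine ⟨k1 + k2, fun i => if i < k1 then f1 i else f2 (i - k1),
    fun i => if i < k1 then t1 i else t2 (i - k1), by omega, by simp [hk1, hf10], ?_, ?_, ?_, ?_⟩
  · have : ¬ (k1 + k2 < k1) := by omega
    simp [this, hf2k]
  · intro i hi
    rcases Nat.lt_or_ge i k1 with h | h
    · rcases Nat.lt_or_ge (i + 1) k1 with h' | h'
      · simpa [h, h'] using hl1 i h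
      · have hik : i + 1 = k1 := by omega
        have : f2 (i + 1 - k1) = f1 (i + 1) := by
          rw [hik]; simp [hf20, ← hf1k]
        simp only [if_pos h, if_neg (by omega : ¬ i + 1 < k1)]
        rw [this]; exact hl1 i h
    · have h1' : ¬ i < k1 := by omega
      have h2' : ¬ i + 1 < k1 := by omega
      have : i + 1 - k1 = (i - k1) + 1 := by omega
      simp only [if_neg h1', if_neg h2', this]
      exact hl2 (i - k1) (by omega)
  · intro i hi
    rcases Nat.lt_or_ge i k1 with h | h
    · simpa [h] using hr1 i h
    · have : ¬ i < k1 := by omega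
      simp only [if_neg this]
      have := hr2 (i - k1) (by omega)
      have := hr1 (k1 - 1) (by omega)
      omega
  · intro i j hij hj
    rcases Nat.lt_or_ge j k1 with h | h
    · have hi : i < k1 := by omega
      simpa [h, hi] using hmono1 i j hij h
    · rcases Nat.lt_or_ge i k1 with h' | h'
      · have := ht1max i h'
        have := hr2 (j - k1) (by omega)
        simp only [if_pos h', if_neg (by omega : ¬ j < k1)]
        omega
      · simp only [if_neg (by omega : ¬ i < k1), if_neg (by omega : ¬ j < k1)]
        exact hmono2 (i - k1) (j - k1) (by omega) (by omega)

lemma InfJ_trans {M : Type} {link : ℕ → M → M → Prop} {m m' m'' : M}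
    (h1 : InfJ link m m') (h2 : InfJ link m' m'') : InfJ link m m'' :=
  fun r => journey_trans (h1 r) h2

lemma infJ_of_link {M : Type} {link : ℕ → M → M → Prop} {a b : M}
    (h : ∀ r, ∃ ρ, r < ρ ∧ link ρ a b) : InfJ link a b := by
  intro r
  obtain ⟨ρ, hρ, hl⟩ := h r
  refine ⟨1, fun i => if i = 0 then a else b, fun _ => ρ, one_pos, rfl, rfl, ?_,
    fun i _ => hρ, by omega⟩
  intro i hi
  have : i = 0 := by omega
  simpa [this] using hl

lemma pool_mem {M : Type} {link : ℕ → M → M → Prop} {P : Set M} (hP : IsPool link P)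
    {m m' : M} (hm : m ∈ P) (hm' : m' ∈ P) : m = m' ∨ InfJ link m m' := by
  obtain ⟨m0, rfl⟩ := hP
  rcases hm with rfl | ⟨hab, hba⟩
  · rcases hm' with rfl | ⟨h1, h2⟩
    · exact Or.inl rfl
    · exact Or.inr h1
  · rcases hm' with rfl | ⟨h1, h2⟩
    · exact Or.inr hba
    · exact Or.inr (InfJ_trans hba h1)

lemma edge_pair {M : Type} [Fintype M] {link : ℕ → M → M → Prop} {P1 P2 : Set M}
    (h : PoolEdge link P1 P2) : ∃ a ∈ P1, ∃ b ∈ P2, InfJ link a b := by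
  classical
  by_contra hc
  push_neg at hc
  have key : ∀ a b : M, ∃ r : ℕ, ∀ ρ, r < ρ → ¬ (a ∈ P1 ∧ b ∈ P2 ∧ link ρ a b) := by
    intro a b
    by_cases ha : a ∈ P1
    · by_cases hb : b ∈ P2
      · have := hc a ha b hb
        rw [InfJ] at this
        push_neg at this
        obtain ⟨r, hr⟩ := this
        refine ⟨r, fun ρ hρ hcontra => ?_⟩
        exact hr ⟨1, fun i => if i = 0 then a else b, fun _ => ρ, one_pos, rfl, rfl,
          by intro i hi
             have h0 : i = 0 := by omega
             subst h0
             simpa using hcontra.2.2,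
          fun i _ => hρ, by omega⟩
      · exact ⟨0, fun ρ _ hx => hb hx.2.1⟩
    · exact ⟨0, fun ρ _ hx => ha hx.1⟩
  choose g hg using key
  set R := Finset.univ.sup (fun p : M × M => g p.1 p.2) with hR
  obtain ⟨ρ, hρ, a, ha, b, hb, hl⟩ := h R
  have hle : g a b ≤ R := Finset.le_sup (f := fun p : M × M => g p.1 p.2)
    (Finset.mem_univ (a, b))
  exact hg a b ρ (by omega) ⟨ha, hb, hl⟩

lemma infJ_combine {M : Type} {link : ℕ → M → M → Prop} {m1 a b m2 : M}
    (h1 : m1 = a ∨ InfJ link m1 a) (hab : InfJ link a b)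
    (h2 : b = m2 ∨ InfJ link b m2) : InfJ link m1 m2 := by
  have hm1b : InfJ link m1 b := by
    rcases h1 with rfl | h1
    · exact hab
    · exact InfJ_trans h1 hab
  rcases h2 with rfl | h2
  · exact hm1b
  · exact InfJ_trans hm1b h2

/-- If the pool graph has a directed path from pool `P1` to pool `P2`, then
every miner of `P1` has infinitely many journeys to every miner of `P2`. -/
theorem stmt_9 {M : Type} [Fintype M] (link : ℕ → M → M → Prop)
    (P1 P2 : Set M) (h1 : IsPool link P1) (h2 : IsPool link P2)
    (hpath : Relation.TransGen (PGEdge link) P1 P2) :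
    ∀ m1 ∈ P1, ∀ m2 ∈ P2, InfJ link m1 m2 := by
  clear h1 h2
  induction hpath with
  | single hedge =>
    obtain ⟨a, ha, b, hb, hab⟩ := edge_pair hedge.2.2
    intro m1 hm1 m2 hm2
    exact infJ_combine (pool_mem hedge.1 hm1 ha) hab (pool_mem hedge.2.1 hb hm2)
  | tail hpq hedge ih =>
    obtain ⟨a, ha, b, hb, hab⟩ := edge_pair hedge.2.2
    intro m1 hm1 m2 hm2
    exact infJ_combine (Or.inr (ih m1 hm1 a ha)) hab (pool_mem hedge.2.1 hb hm2)
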